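/- Let f : Γ → Γ be an immersion of a finite connected core graph with no invariant loop of degree 1 (atoroidal). Then f is (2,n)-hyperbolic for some n ≥ 1: for every nontrivial based loop σ in Γ, either 2·l(f^n(σ)) ≤ l(f^{2n}(σ)) or 2·l(f^n(σ)) ≤ l(σ), where l denotes combinatorial length after tightening rel basepoint. -/

import Mathlib

/-- A finite combinatorial (Serre) graph: a finite set of vertices and a finite set of
oriented edges with a fixed-point-free involution `bar` (orientation reversal) and an
initial-vertex map `ι`. -/
structure CGraph where
  V : Type
  E : Type
  [fV : Fintype V]
  [fE : Fintype E]
  [dV : DecidableEq V]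
  [dE : DecidableEq E]
  ι : E → V
  bar : E → E
  bar_bar : ∀ e, bar (bar e) = e
  bar_ne : ∀ e, bar e ≠ e

attribute [instance] CGraph.fV CGraph.fE CGraph.dV CGraph.dE

namespace CGraph

variable (G : CGraph)

/-- Terminal vertex of an edge. -/
def τ (e : G.E) : G.V := G.ι (G.bar e)

/-- A list of edges is an edge path if consecutive edges are composable. -/
def IsPath (l : List G.E) : Prop := l.Chain' fun e e' => G.τ e = G.ι e'

/-- A path is reduced (immersed) if it has no backtracking. -/
def IsReduced (l : List G.E) : Prop :=
  IsPath G l ∧ l.Chain' fun e e' => e' ≠ G.bar e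

/-- The path `l` starts at the vertex `v`. -/
def StartsAt (l : List G.E) (v : G.V) : Prop := ∀ e ∈ l.head?, G.ι e = v

/-- The path `l` ends at the vertex `v`. -/
def EndsAt (l : List G.E) (v : G.V) : Prop := ∀ e ∈ l.getLast?, G.τ e = v

/-- A nontrivial closed edge path based at `v`. -/
def IsBasedLoopAt (l : List G.E) (v : G.V) : Prop :=
  l ≠ [] ∧ IsPath G l ∧ StartsAt G l v ∧ EndsAt G l v

/-- A nontrivial closed edge path (at some vertex). -/
def IsCircuit (l : List G.E) : Prop :=
  l ≠ [] ∧ IsPath G l ∧ ∃ v, StartsAt G l v ∧ EndsAt G l v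

/-- A circuit is cyclically reduced if it is reduced and there is no backtracking
around the basepoint. -/
def IsCyclicallyReduced (l : List G.E) : Prop :=
  IsReduced G l ∧ ∀ a ∈ l.head?, ∀ b ∈ l.getLast?, a ≠ G.bar b

/-- Elementary reduction of an edge path: deleting a backtracking pair. -/
def ReduceStep (l l' : List G.E) : Prop :=
  ∃ (l₁ l₂ : List G.E) (e : G.E), l = l₁ ++ e :: G.bar e :: l₂ ∧ l' = l₁ ++ l₂

/-- The combinatorial length of a path after tightening (free reduction)
rel its endpoints. -/
noncomputable def redLen (l : List G.E) : ℕ :=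
  sInf {n | ∃ l', Relation.ReflTransGen (ReduceStep G) l l' ∧
    (¬ ∃ l'', ReduceStep G l' l'') ∧ l'.length = n}

/-- One step of free homotopy of loops: an elementary reduction, its inverse,
or a cyclic rotation. -/
def FreeStep (l l' : List G.E) : Prop :=
  ReduceStep G l l' ∨ ReduceStep G l' l ∨ ∃ n, l' = l.rotate n

/-- Two closed edge paths are freely homotopic. -/
def FreelyHomotopic (l l' : List G.E) : Prop :=
  Relation.ReflTransGen (FreeStep G) l l'

/-- The `d`-th power (concatenation) of a closed path. -/
def pow (l : List G.E) (d : ℕ) : List G.E := (List.replicate d l).flatten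

/-- The valence of a vertex: the number of oriented edges emanating from it. -/
def valence (v : G.V) : ℕ := Fintype.card {e : G.E // G.ι e = v}

/-- The graph is connected. -/
def Conn : Prop :=
  ∀ u v : G.V, u = v ∨ ∃ l, l ≠ [] ∧ IsPath G l ∧ StartsAt G l u ∧ EndsAt G l v

/-- A (topological) graph map `Γ → Γ`: vertices to vertices, each edge to a nontrivial
edge path, compatibly with endpoints and orientation reversal. -/
structure GMap (G : CGraph) where
  vmap : G.V → G.V
  emap : G.E → List G.E
  emap_ne : ∀ e, emap e ≠ []
  emap_path : ∀ e, IsPath G (emap e)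
  emap_start : ∀ e, StartsAt G (emap e) (vmap (G.ι e))
  emap_bar : ∀ e, emap (G.bar e) = ((emap e).map G.bar).reverse

/-- The induced map of a graph map on edge paths. -/
def onPaths (F : GMap G) (l : List G.E) : List G.E := l.flatMap F.emap

/-- The `n`-th iterate `f^n` applied to an edge path. -/
def iterMap (F : GMap G) (n : ℕ) (l : List G.E) : List G.E := (onPaths G F)^[n] l

/-- A graph map is an immersion: it is locally injective, i.e. each edge maps to a
reduced path and the derivative map on directions at each vertex is injective. -/
def IsImmersion (F : GMap G) : Prop :=
  (∀ e, IsReduced G (F.emap e)) ∧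
  ∀ e₁ e₂ : G.E, G.ι e₁ = G.ι e₂ → (F.emap e₁).head? = (F.emap e₂).head? → e₁ = e₂

end CGraph

namespace CGraph

open List

variable {G : CGraph}

lemma bar_inj : Function.Injective G.bar := fun a b h => by
  have h2 := congrArg G.bar h; rwa [G.bar_bar, G.bar_bar] at h2

lemma tau_bar (e : G.E) : G.τ (G.bar e) = G.ι e := by
  unfold τ; rw [G.bar_bar]

variable (F : GMap G)

lemma head?_emap_bar (e : G.E) :
    (F.emap (G.bar e)).head? = (F.emap e).getLast?.map G.bar := by
  rw [F.emap_bar, List.head?_reverse, List.getLast?_map]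

lemma emap_end (e : G.E) : EndsAt G (F.emap e) (F.vmap (G.τ e)) := by
  intro b hb
  have h2 : (F.emap (G.bar e)).head? = some (G.bar b) := by
    rw [head?_emap_bar, show (F.emap e).getLast? = some b from hb]; rfl
  have h3 := F.emap_start (G.bar e) (G.bar b) (by rw [h2]; rfl)
  exact h3

lemma onPaths_nil : onPaths G F [] = [] := rfl

lemma onPaths_cons (e : G.E) (t : List G.E) :
    onPaths G F (e :: t) = F.emap e ++ onPaths G F t := by
  simp [onPaths]

lemma onPaths_append (l₁ l₂ : List G.E) :
    onPaths G F (l₁ ++ l₂) = onPaths G F l₁ ++ onPaths G F l₂ := by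
  simp [onPaths]

lemma onPaths_ne_nil {l : List G.E} (h : l ≠ []) : onPaths G F l ≠ [] := by
  cases l with
  | nil => exact absurd rfl h
  | cons e t =>
    rw [onPaths_cons]
    intro hc
    exact F.emap_ne e (List.append_eq_nil_iff.mp hc).1

lemma head?_onPaths (e : G.E) (t : List G.E) :
    (onPaths G F (e :: t)).head? = (F.emap e).head? := by
  rw [onPaths_cons]; exact List.head?_append_of_ne_nil _ (F.emap_ne e)

lemma getLast?_onPaths : ∀ (l : List G.E) (b : G.E), l.getLast? = some b →
    (onPaths G F l).getLast? = (F.emap b).getLast? := by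
  intro l
  induction l with
  | nil => intro b hb; simp at hb
  | cons e t ih =>
    intro b hb
    cases t with
    | nil =>
      simp only [List.getLast?_singleton, Option.some_inj] at hb
      subst hb
      rw [onPaths_cons, onPaths_nil, List.append_nil]
    | cons x s =>
      rw [List.getLast?_cons_cons] at hb
      rw [onPaths_cons, List.getLast?_append_of_ne_nil _ (onPaths_ne_nil F (by simp))]
      exact ih b hb

lemma chain'_and {α : Type} {R S : α → α → Prop} {l : List α}
    (hR : l.Chain' R) (hS : l.Chain' S) : l.Chain' (fun a b => R a b ∧ S a b) := by
  rw [List.Chain', List.isChain_iff_getElem] at hR hS ⊢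
  exact fun i h => ⟨hR i h, hS i h⟩

lemma nil_not_mem_map_emap (l : List G.E) : [] ∉ l.map F.emap := by
  intro h
  obtain ⟨e, _, he⟩ := List.mem_map.mp h
  exact F.emap_ne e he

lemma isPath_onPaths {l : List G.E} (h : IsPath G l) : IsPath G (onPaths G F l) := by
  unfold IsPath at h ⊢
  rw [show onPaths G F l = (l.map F.emap).flatten from List.flatMap_def ..]
  rw [List.Chain', List.isChain_flatten (nil_not_mem_map_emap F l)]
  constructor
  · intro b hb
    obtain ⟨e, _, rfl⟩ := List.mem_map.mp hb
    exact F.emap_path e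
  · rw [List.isChain_map]
    refine h.imp ?_
    intro e e' hee' x hx y hy
    have h1 := emap_end F e x hx
    have h2 := F.emap_start e' y hy
    rw [h1, h2, hee']

lemma chain'_red_onPaths (hF : IsImmersion G F) {l : List G.E} (hp : IsPath G l)
    (hr : l.Chain' (fun e e' => e' ≠ G.bar e)) :
    (onPaths G F l).Chain' (fun e e' => e' ≠ G.bar e) := by
  rw [show onPaths G F l = (l.map F.emap).flatten from List.flatMap_def ..]
  rw [List.Chain', List.isChain_flatten (nil_not_mem_map_emap F l)]
  constructor
  · intro b hb
    obtain ⟨e, _, rfl⟩ := List.mem_map.mp hb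
    exact (hF.1 e).2
  · rw [List.isChain_map]
    refine (chain'_and hp hr).imp ?_
    rintro e e' ⟨hee', hne⟩ x hx y hy hc
    apply hne
    have h1 : (F.emap (G.bar e)).head? = some y := by
      rw [head?_emap_bar, show (F.emap e).getLast? = some x from hx, hc]; rfl
    have h2 : (F.emap e').head? = some y := hy
    refine (hF.2 e' (G.bar e) ?_ (by rw [h1, h2])).trans rfl
    exact hee'.symm

lemma startsAt_onPaths {l : List G.E} {v : G.V} (h : StartsAt G l v) :
    StartsAt G (onPaths G F l) (F.vmap v) := by
  cases l with
  | nil => intro a ha; simp [onPaths_nil] at ha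
  | cons e t =>
    intro a ha
    rw [head?_onPaths] at ha
    have h1 := F.emap_start e a ha
    rwa [h e rfl] at h1

lemma endsAt_onPaths {l : List G.E} {v : G.V} (h : EndsAt G l v) :
    EndsAt G (onPaths G F l) (F.vmap v) := by
  intro b hb
  cases hl : l.getLast? with
  | none =>
    rw [List.getLast?_eq_none_iff] at hl
    subst hl; simp [onPaths_nil] at hb
  | some c =>
    rw [getLast?_onPaths F l c hl] at hb
    have h1 := emap_end F c b hb
    rwa [h c hl] at h1


/-! ### Iterates -/

lemma iterMap_zero (l : List G.E) : iterMap G F 0 l = l := rfl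

lemma iterMap_succ (n : ℕ) (l : List G.E) :
    iterMap G F (n + 1) l = iterMap G F n (onPaths G F l) :=
  Function.iterate_succ_apply _ _ _

lemma iterMap_succ' (n : ℕ) (l : List G.E) :
    iterMap G F (n + 1) l = onPaths G F (iterMap G F n l) :=
  Function.iterate_succ_apply' _ _ _

lemma iterMap_nil (n : ℕ) : iterMap G F n [] = [] := by
  induction n with
  | zero => rfl
  | succ n ih => rw [iterMap_succ', ih, onPaths_nil]

lemma iterMap_append (n : ℕ) (l₁ l₂ : List G.E) :
    iterMap G F n (l₁ ++ l₂) = iterMap G F n l₁ ++ iterMap G F n l₂ := by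
  induction n generalizing l₁ l₂ with
  | zero => rfl
  | succ n ih => rw [iterMap_succ, onPaths_append, ih, iterMap_succ, iterMap_succ]

lemma iterMap_ne_nil {l : List G.E} (n : ℕ) (h : l ≠ []) : iterMap G F n l ≠ [] := by
  induction n with
  | zero => exact h
  | succ n ih => rw [iterMap_succ']; exact onPaths_ne_nil F ih

/-- Length of the image of a single edge under the `n`-th iterate. -/
noncomputable def elen (n : ℕ) (e : G.E) : ℕ := (iterMap G F n [e]).length

lemma length_iterMap (n : ℕ) (l : List G.E) :
    (iterMap G F n l).length = (l.map (elen F n)).sum := by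
  induction l with
  | nil => simp [iterMap_nil]
  | cons e t ih =>
    have h1 : iterMap G F n (e :: t) = iterMap G F n [e] ++ iterMap G F n t := by
      rw [← iterMap_append]; rfl
    rw [h1]; simp [elen, ih]

lemma elen_pos (n : ℕ) (e : G.E) : 1 ≤ elen F n e := by
  have h := iterMap_ne_nil F (l := [e]) n (by simp)
  unfold elen
  exact Nat.one_le_iff_ne_zero.mpr (fun hc => h (List.length_eq_zero_iff.mp hc))

lemma length_le_onPaths (l : List G.E) : l.length ≤ (onPaths G F l).length := by
  induction l with
  | nil => simp [onPaths_nil]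
  | cons e t ih =>
    rw [onPaths_cons, List.length_append, List.length_cons]
    have := List.length_pos_iff.mpr (F.emap_ne e)
    omega

lemma elen_mono (e : G.E) : Monotone (fun n => elen F n e) := by
  apply monotone_nat_of_le_succ
  intro n
  unfold elen
  rw [iterMap_succ']
  exact length_le_onPaths F _

/-! ### Bundled preservation -/

/-- A reduced closed path at `v` (possibly empty). -/
def RC (l : List G.E) (v : G.V) : Prop :=
  IsPath G l ∧ StartsAt G l v ∧ EndsAt G l v ∧ l.Chain' (fun e e' => e' ≠ G.bar e)

lemma RC_onPaths (hF : IsImmersion G F) {l : List G.E} {v : G.V} (h : RC l v) :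
    RC (onPaths G F l) (F.vmap v) :=
  ⟨isPath_onPaths F h.1, startsAt_onPaths F h.2.1, endsAt_onPaths F h.2.2.1,
    chain'_red_onPaths F hF h.1 h.2.2.2⟩

lemma RC_iterMap (hF : IsImmersion G F) (n : ℕ) {l : List G.E} {v : G.V} (h : RC l v) :
    RC (iterMap G F n l) (F.vmap^[n] v) := by
  induction n with
  | zero => exact h
  | succ n ih =>
    rw [iterMap_succ', Function.iterate_succ_apply']
    exact RC_onPaths F hF ih

lemma cyc_onPaths (hF : IsImmersion G F) {w : List G.E}
    (h1 : IsCircuit G w) (h2 : IsCyclicallyReduced G w) :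
    IsCircuit G (onPaths G F w) ∧ IsCyclicallyReduced G (onPaths G F w) := by
  obtain ⟨hne, hp, v, hs, he⟩ := h1
  obtain ⟨⟨-, hch⟩, hcyc⟩ := h2
  obtain ⟨e₁, t, rfl⟩ := List.exists_cons_of_ne_nil hne
  have hb : ∃ b, (e₁ :: t).getLast? = some b := ⟨(e₁ :: t).getLast (by simp), List.getLast?_eq_getLast _⟩
  obtain ⟨b, hbl⟩ := hb
  refine ⟨⟨onPaths_ne_nil F hne, isPath_onPaths F hp, F.vmap v, startsAt_onPaths F hs,
      endsAt_onPaths F he⟩, ⟨⟨isPath_onPaths F hp, chain'_red_onPaths F hF hp hch⟩, ?_⟩⟩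
  intro x hx y hy hxy
  rw [head?_onPaths] at hx
  rw [getLast?_onPaths F _ b hbl] at hy
  apply hcyc e₁ rfl b hbl
  have hh1 : (F.emap (G.bar b)).head? = some x := by
    rw [head?_emap_bar, show (F.emap b).getLast? = some y from hy, hxy]; rfl
  have hh2 : (F.emap e₁).head? = some x := hx
  apply hF.2 e₁ (G.bar b) _ (by rw [hh1, hh2])
  have hv1 : G.ι e₁ = v := hs e₁ rfl
  have hv2 : G.τ b = v := he b hbl
  rw [hv1]; exact hv2.symm

lemma cyc_iterMap (hF : IsImmersion G F) (n : ℕ) {w : List G.E}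
    (h1 : IsCircuit G w) (h2 : IsCyclicallyReduced G w) :
    IsCircuit G (iterMap G F n w) ∧ IsCyclicallyReduced G (iterMap G F n w) := by
  induction n with
  | zero => exact ⟨h1, h2⟩
  | succ n ih =>
    rw [iterMap_succ']
    exact cyc_onPaths F hF ih.1 ih.2

/-! ### Reduction machinery -/

lemma reduceStep_length {l l' : List G.E} (h : ReduceStep G l l') :
    l'.length + 2 = l.length := by
  obtain ⟨l₁, l₂, e, rfl, rfl⟩ := h
  simp; omega

lemma reduceStep_cons {l l' : List G.E} (a : G.E) (h : ReduceStep G l l') :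
    ReduceStep G (a :: l) (a :: l') := by
  obtain ⟨l₁, l₂, e, rfl, rfl⟩ := h
  exact ⟨a :: l₁, l₂, e, rfl, rfl⟩

lemma not_reduceStep_iff_chain' {l : List G.E} :
    (¬ ∃ l', ReduceStep G l l') ↔ l.Chain' (fun e e' => e' ≠ G.bar e) := by
  constructor
  · intro h
    by_contra hc
    apply h; clear h
    induction l with
    | nil => exact absurd List.isChain_nil hc
    | cons a t ih =>
      cases t with
      | nil => exact absurd (List.isChain_singleton a) hc
      | cons b s =>
        rw [List.Chain', List.isChain_cons_cons] at hc
        by_cases hb : b = G.bar a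
        · exact ⟨s, [], s, a, by simp [hb], rfl⟩
        · obtain ⟨l', hl'⟩ := ih (fun hcs => hc ⟨hb, hcs⟩)
          exact ⟨a :: l', reduceStep_cons a hl'⟩
  · rintro hc ⟨l', l₁, l₂, e, rfl, -⟩
    have hinf : [e, G.bar e] <:+: l₁ ++ e :: G.bar e :: l₂ := ⟨l₁, l₂, by simp⟩
    have := hc.infix hinf
    rw [List.isChain_pair] at this
    exact this rfl

lemma diamond_aux : ∀ (l₁ m₁ : List G.E) (e f : G.E) (l₂ m₂ : List G.E),
    l₁.length ≤ m₁.length →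
    l₁ ++ e :: G.bar e :: l₂ = m₁ ++ f :: G.bar f :: m₂ →
    l₁ ++ l₂ = m₁ ++ m₂ ∨ ∃ d, ReduceStep G (l₁ ++ l₂) d ∧ ReduceStep G (m₁ ++ m₂) d := by
  intro l₁
  induction l₁ with
  | nil =>
    intro m₁ e f l₂ m₂ _ heq
    cases m₁ with
    | nil =>
      simp only [List.nil_append, List.cons.injEq] at heq
      obtain ⟨rfl, -, rfl⟩ := heq
      exact Or.inl rfl
    | cons x m₁' =>
      cases m₁' with
      | nil =>
        simp only [List.nil_append, List.cons_append, List.cons.injEq, List.nil_append] at heq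
        obtain ⟨rfl, hf, hl⟩ := heq
        subst hf
        left
        simp only [List.nil_append]
        rw [hl, G.bar_bar]
        simp
      | cons y k =>
        simp only [List.nil_append, List.cons_append, List.cons_append, List.cons.injEq] at heq
        obtain ⟨rfl, hy, hl⟩ := heq
        right
        refine ⟨k ++ m₂, ?_, ?_⟩
        · simp only [List.nil_append]
          rw [hl]
          exact ⟨k, m₂, f, rfl, rfl⟩
        · refine ⟨[], k ++ m₂, e, ?_, rfl⟩
          simp [← hy]
  | cons a l₁' ih =>
    intro m₁ e f l₂ m₂ hlen heq
    cases m₁ with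
    | nil => simp at hlen
    | cons b m₁' =>
      simp only [List.length_cons, Nat.add_le_add_iff_right] at hlen
      simp only [List.cons_append, List.cons.injEq] at heq
      obtain ⟨rfl, heq'⟩ := heq
      rcases ih m₁' e f l₂ m₂ hlen heq' with h | ⟨d, h1, h2⟩
      · left; simp only [List.cons_append, h]
      · right
        exact ⟨a :: d, reduceStep_cons a h1, reduceStep_cons a h2⟩

lemma reduceStep_diamond {l b c : List G.E} (hb : ReduceStep G l b) (hc : ReduceStep G l c) :
    b = c ∨ ∃ d, ReduceStep G b d ∧ ReduceStep G c d := by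
  obtain ⟨l₁, l₂, e, rfl, rfl⟩ := hb
  obtain ⟨m₁, m₂, f, heq, rfl⟩ := hc
  rcases le_total l₁.length m₁.length with h | h
  · exact diamond_aux l₁ m₁ e f l₂ m₂ h heq
  · rcases diamond_aux m₁ l₁ f e m₂ l₂ h heq.symm with h' | ⟨d, h1, h2⟩
    · exact Or.inl h'.symm
    · exact Or.inr ⟨d, h2, h1⟩

lemma reduct_unique {l ρ₁ ρ₂ : List G.E}
    (h1 : Relation.ReflTransGen (ReduceStep G) l ρ₁)
    (h2 : Relation.ReflTransGen (ReduceStep G) l ρ₂)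
    (t1 : ¬ ∃ x, ReduceStep G ρ₁ x) (t2 : ¬ ∃ x, ReduceStep G ρ₂ x) : ρ₁ = ρ₂ := by
  have hcr : ∀ a b c : List G.E, ReduceStep G a b → ReduceStep G a c →
      ∃ d, Relation.ReflGen (ReduceStep G) b d ∧ Relation.ReflTransGen (ReduceStep G) c d := by
    intro a b c hab hac
    rcases reduceStep_diamond hab hac with rfl | ⟨d, hd1, hd2⟩
    · exact ⟨b, Relation.ReflGen.refl, Relation.ReflTransGen.refl⟩
    · exact ⟨d, Relation.ReflGen.single hd1, Relation.ReflTransGen.single hd2⟩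
  obtain ⟨d, hd1, hd2⟩ := Relation.church_rosser hcr h1 h2
  have e1 : ρ₁ = d := by
    rcases hd1.cases_head with h | ⟨x, hx, -⟩
    · exact h
    · exact absurd ⟨x, hx⟩ t1
  have e2 : ρ₂ = d := by
    rcases hd2.cases_head with h | ⟨x, hx, -⟩
    · exact h
    · exact absurd ⟨x, hx⟩ t2
  rw [e1, e2]

lemma redLen_eq {l ρ : List G.E}
    (h : Relation.ReflTransGen (ReduceStep G) l ρ)
    (t : ¬ ∃ x, ReduceStep G ρ x) : redLen G l = ρ.length := by
  have hset : {n | ∃ l', Relation.ReflTransGen (ReduceStep G) l l' ∧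
      (¬ ∃ l'', ReduceStep G l' l'') ∧ l'.length = n} = {ρ.length} := by
    ext n
    constructor
    · rintro ⟨l', h1, h2, rfl⟩
      rw [Set.mem_singleton_iff, reduct_unique h1 h h2 t]
    · rintro hn
      rw [Set.mem_singleton_iff] at hn
      exact ⟨ρ, h, t, hn.symm⟩
  rw [redLen, hset, csInf_singleton]

theorem exists_reduct (l : List G.E) :
    ∃ ρ, Relation.ReflTransGen (ReduceStep G) l ρ ∧ ¬ ∃ x, ReduceStep G ρ x := by
  by_cases h : ∃ l', ReduceStep G l l'
  · obtain ⟨l', hl'⟩ := h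
    have hlt : l'.length < l.length := by
      have := reduceStep_length hl'; omega
    obtain ⟨ρ, h1, h2⟩ := exists_reduct l'
    exact ⟨ρ, Relation.ReflTransGen.head hl' h1, h2⟩
  · exact ⟨l, Relation.ReflTransGen.refl, h⟩
termination_by l.length

lemma step_closed {l l' : List G.E} {v : G.V} (h : ReduceStep G l l')
    (hp : IsPath G l) (hs : StartsAt G l v) (he : EndsAt G l v) :
    IsPath G l' ∧ StartsAt G l' v ∧ EndsAt G l' v := by
  obtain ⟨l₁, l₂, e, rfl, rfl⟩ := h
  unfold IsPath at hp
  rw [List.Chain', List.isChain_append] at hp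
  obtain ⟨hp1, hp2, hpj⟩ := hp
  rw [List.isChain_cons_cons] at hp2
  obtain ⟨-, hp2⟩ := hp2
  rw [List.isChain_cons] at hp2
  obtain ⟨hj2, hp3⟩ := hp2
  have hpath : IsPath G (l₁ ++ l₂) := by
    unfold IsPath
    rw [List.Chain', List.isChain_append]
    refine ⟨hp1, hp3, ?_⟩
    intro x hx y hy
    have h1 := hpj x hx e rfl
    have h2 := hj2 y hy
    rw [tau_bar] at h2
    rw [h1, ← h2]
  refine ⟨hpath, ?_, ?_⟩
  · intro a ha
    cases l₁ with
    | nil =>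
      simp only [List.nil_append] at ha hs ⊢
      have h2 := hj2 a ha
      rw [tau_bar] at h2
      rw [← h2]
      exact hs e rfl
    | cons x t =>
      rw [List.head?_append_of_ne_nil _ (by simp)] at ha
      exact hs a ha
  · intro b hb
    cases hl2 : l₂ with
    | nil =>
      subst hl2
      rw [List.append_nil] at hb
      have h1 := hpj b hb e rfl
      rw [h1]
      have h2 := he (G.bar e) (by
        rw [List.getLast?_append_of_ne_nil _ (by simp)]
        rfl)
      rw [tau_bar] at h2
      exact h2
    | cons x t =>
      subst hl2
      rw [List.getLast?_append_of_ne_nil _ (by simp)] at hb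
      apply he
      rw [List.getLast?_append_of_ne_nil _ (by simp)]
      rw [show (e :: G.bar e :: x :: t).getLast? = (x :: t).getLast? from rfl]
      exact hb

lemma rtg_closed {l ρ : List G.E} {v : G.V}
    (h : Relation.ReflTransGen (ReduceStep G) l ρ)
    (hp : IsPath G l) (hs : StartsAt G l v) (he : EndsAt G l v) :
    IsPath G ρ ∧ StartsAt G ρ v ∧ EndsAt G ρ v := by
  induction h with
  | refl => exact ⟨hp, hs, he⟩
  | tail hab hbc ih =>
    obtain ⟨h1, h2, h3⟩ := ih
    exact step_closed hbc h1 h2 h3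

lemma cancel_rtg : ∀ (w A B : List G.E),
    Relation.ReflTransGen (ReduceStep G) (A ++ (w ++ (w.map G.bar).reverse) ++ B) (A ++ B) := by
  intro w
  induction w with
  | nil =>
    intro A B
    simp only [List.map_nil, List.reverse_nil, List.append_nil]
    exact Relation.ReflTransGen.refl
  | cons x w' ih =>
    intro A B
    have h1 := ih (A ++ [x]) (G.bar x :: B)
    have key : A ++ ((x :: w') ++ ((x :: w').map G.bar).reverse) ++ B
        = (A ++ [x]) ++ (w' ++ (w'.map G.bar).reverse) ++ (G.bar x :: B) := by
      simp
    rw [key]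
    refine h1.tail ?_
    exact ⟨A, B, x, by simp, rfl⟩

lemma onPaths_reduceStep {l l' : List G.E} (h : ReduceStep G l l') :
    Relation.ReflTransGen (ReduceStep G) (onPaths G F l) (onPaths G F l') := by
  obtain ⟨l₁, l₂, e, rfl, rfl⟩ := h
  have hc := cancel_rtg (G := G) (F.emap e) (onPaths G F l₁) (onPaths G F l₂)
  have key : onPaths G F (l₁ ++ e :: G.bar e :: l₂)
      = onPaths G F l₁ ++ (F.emap e ++ ((F.emap e).map G.bar).reverse) ++ onPaths G F l₂ := by
    rw [onPaths_append, onPaths_cons, onPaths_cons, ← F.emap_bar]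
    simp
  rw [key, onPaths_append]
  exact hc

lemma onPaths_rtg {l l' : List G.E}
    (h : Relation.ReflTransGen (ReduceStep G) l l') :
    Relation.ReflTransGen (ReduceStep G) (onPaths G F l) (onPaths G F l') := by
  induction h with
  | refl => exact Relation.ReflTransGen.refl
  | tail _ hbc ih => exact ih.trans (onPaths_reduceStep F hbc)

lemma iterMap_rtg (n : ℕ) {l l' : List G.E}
    (h : Relation.ReflTransGen (ReduceStep G) l l') :
    Relation.ReflTransGen (ReduceStep G) (iterMap G F n l) (iterMap G F n l') := by
  induction n with
  | zero => exact h
  | succ n ih =>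
    rw [iterMap_succ', iterMap_succ']
    exact onPaths_rtg F ih



/-! ### Bounded edges -/

/-- An edge has bounded iterated image lengths. -/
def Bdd (F : GMap G) (e : G.E) : Prop := ∃ B, ∀ n, elen F n e ≤ B

open Classical in
/-- Boolean predicate for boundedness. -/
noncomputable def pb (F : GMap G) : G.E → Bool := fun e => decide (Bdd F e)

lemma pb_iff (e : G.E) : pb F e = true ↔ Bdd F e := by
  simp [pb]

lemma pb_false_iff (e : G.E) : pb F e = false ↔ ¬ Bdd F e := by
  rw [← pb_iff]
  cases pb F e <;> simp

theorem no_bdd_circuit (hF : IsImmersion G F)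
    (hat : ¬ ∃ k ≥ 1, ∃ σ : List G.E, IsCircuit G σ ∧ IsCyclicallyReduced G σ ∧
      FreelyHomotopic G (iterMap G F k σ) σ)
    {w : List G.E} (h1 : IsCircuit G w) (h2 : IsCyclicallyReduced G w)
    (hb : ∀ e ∈ w, Bdd F e) : False := by
  have hbb : ∃ B, ∀ n, (iterMap G F n w).length ≤ B := by
    clear h1 h2
    induction w with
    | nil => exact ⟨0, fun n => by simp [iterMap_nil]⟩
    | cons e t ih =>
      obtain ⟨B1, hB1⟩ := hb e (by simp)
      obtain ⟨B2, hB2⟩ := ih (fun x hx => hb x (by simp [hx]))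
      refine ⟨B1 + B2, fun n => ?_⟩
      have hsplit : iterMap G F n (e :: t) = iterMap G F n [e] ++ iterMap G F n t := by
        rw [← iterMap_append]; rfl
      rw [hsplit, List.length_append]
      exact Nat.add_le_add (hB1 n) (hB2 n)
  obtain ⟨B, hB⟩ := hbb
  have hkey : ∀ i j : ℕ, i < j → iterMap G F i w = iterMap G F j w → False := by
    intro i j hij heq
    apply hat
    refine ⟨j - i, by omega, iterMap G F i w, (cyc_iterMap F hF i h1 h2).1,
      (cyc_iterMap F hF i h1 h2).2, ?_⟩
    have hc : iterMap G F (j - i) (iterMap G F i w) = iterMap G F j w := by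
      unfold iterMap
      rw [← Function.iterate_add_apply]
      congr 1
      omega
    rw [hc, ← heq]
    exact Relation.ReflTransGen.refl
  have hfin : {l : List G.E | l.length ≤ B}.Finite := List.finite_length_le _ _
  have hmaps : Set.MapsTo (fun n => iterMap G F n w) Set.univ {l | l.length ≤ B} :=
    fun n _ => hB n
  obtain ⟨i, -, j, -, hij, heq⟩ := Set.infinite_univ.exists_ne_map_eq_of_mapsTo hmaps hfin
  rcases hij.lt_or_gt with h | h
  · exact hkey i j h heq
  · exact hkey j i h heq.symm

/-! ### Extracting circuits from loops -/

theorem exists_circuit_of_loop (l : List G.E) (v : G.V) (hne : l ≠ []) (hp : IsPath G l)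
    (hs : StartsAt G l v) (he : EndsAt G l v) (hch : l.Chain' (fun e e' => e' ≠ G.bar e)) :
    ∃ w, IsCircuit G w ∧ IsCyclicallyReduced G w ∧ ∀ e ∈ w, e ∈ l := by
  obtain ⟨a, t, rfl⟩ := List.exists_cons_of_ne_nil hne
  cases ht : t.reverse with
  | nil =>
    have ht0 : t = [] := by rw [← List.reverse_reverse t, ht]; rfl
    subst ht0
    refine ⟨[a], ⟨by simp, hp, v, hs, he⟩, ⟨⟨hp, hch⟩, ?_⟩, by simp⟩
    intro x hx y hy
    have hxa : a = x := by simpa using hx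
    have hya : a = y := by simpa using hy
    rw [← hxa, ← hya]
    exact (G.bar_ne a).symm
  | cons b m' =>
    have htt : t = m'.reverse ++ [b] := by rw [← List.reverse_reverse t, ht]; simp
    subst htt
    have hlast : (a :: (m'.reverse ++ [b])).getLast? = some b := by
      rw [show a :: (m'.reverse ++ [b]) = (a :: m'.reverse) ++ [b] by simp,
        List.getLast?_append_of_ne_nil _ (by simp)]
      rfl
    by_cases hab : a = G.bar b
    · by_cases hmz : m'.reverse = []
      · exfalso
        rw [hmz] at hch
        have hc2 : b ≠ G.bar a := by
          have := hch
          rw [List.nil_append, List.Chain', List.isChain_pair] at this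
          exact this
        apply hc2
        rw [hab, G.bar_bar]
      · have hinf : m'.reverse <:+: a :: (m'.reverse ++ [b]) := ⟨[a], [b], by simp⟩
        have hpm : IsPath G m'.reverse := List.IsChain.infix hp hinf
        have hchm := hch.infix hinf
        have hbara : G.bar a = b := by rw [hab, G.bar_bar]
        have hsm : StartsAt G m'.reverse (G.τ a) := by
          intro y hy
          have hhead := (List.isChain_cons.mp hp).1 y
            (by rwa [List.head?_append_of_ne_nil _ hmz])
          exact hhead.symm
        have hem : EndsAt G m'.reverse (G.τ a) := by
          intro y hy
          have hjun := (List.isChain_append.mp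
            (show List.Chain' (fun e e' => G.τ e = G.ι e') ((a :: m'.reverse) ++ [b]) by
              simpa [IsPath] using hp)).2.2
          have h3 := hjun y (by
            rw [show (a :: m'.reverse).getLast? = m'.reverse.getLast? from
              List.getLast?_append_of_ne_nil [a] hmz]
            exact hy) b rfl
          rw [h3, ← hbara]
          rfl
        obtain ⟨w, hw1, hw2, hw3⟩ := exists_circuit_of_loop m'.reverse (G.τ a) hmz hpm hsm hem hchm
        refine ⟨w, hw1, hw2, fun e hew => ?_⟩
        have := hw3 e hew
        simp only [List.mem_cons, List.mem_append]
        exact Or.inr (Or.inl this)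
    · refine ⟨a :: (m'.reverse ++ [b]), ⟨by simp, hp, v, hs, he⟩, ⟨⟨hp, hch⟩, ?_⟩, fun e h => h⟩
      intro x hx y hy
      have hxa : a = x := by simpa using hx
      have hyb : b = y := by
        rw [show (a :: (m'.reverse ++ [b])).getLast? = some b from hlast] at hy
        simpa using hy
      rw [← hxa, ← hyb]
      exact hab
termination_by l.length
decreasing_by subst_vars; simp

theorem bdd_path_short (hF : IsImmersion G F)
    (hat : ¬ ∃ k ≥ 1, ∃ σ : List G.E, IsCircuit G σ ∧ IsCyclicallyReduced G σ ∧
      FreelyHomotopic G (iterMap G F k σ) σ)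
    {l : List G.E} (hp : IsPath G l) (hch : l.Chain' (fun e e' => e' ≠ G.bar e))
    (hb : ∀ e ∈ l, Bdd F e) : l.length ≤ Fintype.card G.V := by
  by_contra hlong
  push_neg at hlong
  have hcard : Fintype.card G.V < Fintype.card (Fin l.length) := by simpa
  obtain ⟨i, j, hij0, hfeq⟩ := Fintype.exists_ne_map_eq_of_card_lt
      (fun k : Fin l.length => G.ι (l.get k)) hcard
  have hkey : ∀ i j : Fin l.length, (i : ℕ) < (j : ℕ) →
      G.ι (l.get i) = G.ι (l.get j) → False := by
    intro i j hij heq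
    have hjlen : (j : ℕ) ≤ l.length := le_of_lt j.2
    set l' := (l.take j).drop i with hl'
    have hlen' : l'.length = j - i := by
      rw [hl', List.length_drop, List.length_take, min_eq_left hjlen]
    have hne' : l' ≠ [] := by
      intro hc
      rw [hc] at hlen'
      simp at hlen'
      omega
    have hh : l'.head? = some (l.get i) := by
      rw [hl', List.head?_drop, List.getElem?_take_of_lt hij, List.getElem?_eq_getElem i.2]
      rfl
    have hidx : (i : ℕ) + ((j : ℕ) - i - 1) = j - 1 := by omega
    have hj1 : (j : ℕ) - 1 < l.length := by omega
    have hgl : l'.getLast? = some (l.get ⟨j - 1, hj1⟩) := by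
      rw [List.getLast?_eq_getElem?, hlen', hl', List.getElem?_drop, hidx,
        List.getElem?_take_of_lt (by omega), List.getElem?_eq_getElem hj1]
      rfl
    have hchain : G.τ (l.get ⟨(j : ℕ) - 1, hj1⟩) = G.ι (l.get ⟨(j : ℕ) - 1 + 1, by omega⟩) :=
      List.isChain_iff_getElem.mp hp ((j : ℕ) - 1) (by omega)
    have hfix : (⟨(j : ℕ) - 1 + 1, by omega⟩ : Fin l.length) = j := by
      ext; simp; omega
    rw [hfix] at hchain
    -- hchain : τ (l.get ⟨j-1,_⟩) = ι (l.get j)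
    have hps : IsPath G l' := (List.IsChain.drop (List.IsChain.take hp j) i)
    have hchs := (List.IsChain.drop (List.IsChain.take hch j) i)
    have hss : StartsAt G l' (G.ι (l.get i)) := by
      intro e hee
      rw [hh] at hee
      have he2 : l.get i = e := by simpa using hee
      rw [← he2]
    have hes : EndsAt G l' (G.ι (l.get i)) := by
      intro e hee
      rw [hgl] at hee
      have he2 : l.get ⟨(j : ℕ) - 1, hj1⟩ = e := by simpa using hee
      rw [← he2]
      rw [show G.τ (l.get ⟨(j : ℕ) - 1, hj1⟩) = G.ι (l.get j) from hchain]
      exact heq.symm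
    obtain ⟨w, hw1, hw2, hw3⟩ := exists_circuit_of_loop l' (G.ι (l.get i)) hne' hps hss hes hchs
    exact no_bdd_circuit F hF hat hw1 hw2 (fun e hew =>
      hb e (List.mem_of_mem_take (List.mem_of_mem_drop (hw3 e hew))))
  rcases Nat.lt_or_ge (i : ℕ) (j : ℕ) with h | h
  · exact hkey i j h hfeq
  · have hne2 : (j : ℕ) < (i : ℕ) := by
      rcases Nat.lt_or_ge (j : ℕ) (i : ℕ) with h2 | h2
      · exact h2
      · exact absurd (Fin.ext (by omega)) hij0
    exact hkey j i hne2 hfeq.symm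

lemma dropWhile_head_false {α : Type} (p : α → Bool) :
    ∀ (l : List α) (e : α) (t : List α), l.dropWhile p = e :: t → p e = false := by
  intro l
  induction l with
  | nil => intro e t h; simp at h
  | cons a s ih =>
    intro e t h
    rw [List.dropWhile_cons] at h
    by_cases hpa : p a = true
    · rw [if_pos hpa] at h
      exact ih e t h
    · rw [if_neg hpa] at h
      injection h with h1 h2
      subst h1
      exact Bool.eq_false_iff.mpr hpa

theorem count_bdd_le (hF : IsImmersion G F)
    (hat : ¬ ∃ k ≥ 1, ∃ σ : List G.E, IsCircuit G σ ∧ IsCyclicallyReduced G σ ∧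
      FreelyHomotopic G (iterMap G F k σ) σ)
    (l : List G.E) (hp : IsPath G l) (hch : l.Chain' (fun e e' => e' ≠ G.bar e)) :
    l.countP (pb F) ≤ (Fintype.card G.V) * (l.countP (fun e => !pb F e) + 1) := by
  cases hdw : l.dropWhile (pb F) with
  | nil =>
    have hltw : l = l.takeWhile (pb F) := by
      conv_lhs => rw [← List.takeWhile_append_dropWhile (p := pb F) (l := l)]
      rw [hdw, List.append_nil]
    have hall : ∀ e ∈ l, Bdd F e := by
      intro e hel
      rw [hltw] at hel
      exact (pb_iff F e).mp (List.mem_takeWhile_imp hel)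
    have hlen := bdd_path_short F hF hat hp hch hall
    calc l.countP (pb F) ≤ l.length := List.countP_le_length
      _ ≤ Fintype.card G.V := hlen
      _ ≤ Fintype.card G.V * (l.countP (fun e => !pb F e) + 1) :=
          Nat.le_mul_of_pos_right _ (by omega)
  | cons e t =>
    have hsplit : l = l.takeWhile (pb F) ++ e :: t := by
      conv_lhs => rw [← List.takeWhile_append_dropWhile (p := pb F) (l := l)]
      rw [hdw]
    have hpe : pb F e = false := dropWhile_head_false (pb F) l e t hdw
    have hsuf : t <:+ l := by
      have h1 : e :: t <:+ l := hdw ▸ List.dropWhile_suffix (pb F)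
      exact (List.suffix_cons e t).trans h1
    have hpt : IsPath G t := List.IsChain.suffix hp hsuf
    have hcht : t.Chain' (fun e e' => e' ≠ G.bar e) := hch.suffix hsuf
    have hlt : t.length < l.length := by
      rw [hsplit]
      simp
      omega
    have ihres := count_bdd_le hF hat t hpt hcht
    have htwprop : ∀ x ∈ l.takeWhile (pb F), Bdd F x :=
      fun x hx => (pb_iff F x).mp (List.mem_takeWhile_imp hx)
    have htwpath : IsPath G (l.takeWhile (pb F)) :=
      List.IsChain.prefix hp (List.takeWhile_prefix _)
    have htwch := hch.prefix (List.takeWhile_prefix (p := pb F))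
    have htw : (l.takeWhile (pb F)).length ≤ Fintype.card G.V :=
      bdd_path_short F hF hat htwpath htwch htwprop
    have hctw : (l.takeWhile (pb F)).countP (pb F) ≤ Fintype.card G.V :=
      le_trans (List.countP_le_length) htw
    rw [hsplit, List.countP_append, List.countP_append,
      List.countP_cons_of_neg (by simp [hpe]),
      List.countP_cons_of_pos (by simp [hpe])]
    have h1 : Fintype.card G.V * (t.countP (fun e => !pb F e) + 1 + 1) ≤
        Fintype.card G.V * ((l.takeWhile (pb F)).countP (fun e => !pb F e) +
          (t.countP (fun e => !pb F e) + 1) + 1) :=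
      Nat.mul_le_mul_left _ (by omega)
    have h2 : Fintype.card G.V * (t.countP (fun e => !pb F e) + 1 + 1) =
        Fintype.card G.V + Fintype.card G.V * (t.countP (fun e => !pb F e) + 1) := by ring
    linarith [h1, h2, hctw, ihres]
termination_by l.length


lemma sum_lb (A : ℕ) (g : G.E → ℕ) (h1 : ∀ e, 1 ≤ g e) (h2 : ∀ e, pb F e = false → A ≤ g e) :
    ∀ l : List G.E, l.countP (pb F) + A * l.countP (fun e => !pb F e) ≤ (l.map g).sum := by
  intro l
  induction l with
  | nil => simp
  | cons e t ih =>
    rw [List.map_cons, List.sum_cons]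
    by_cases hpe : pb F e = true
    · rw [List.countP_cons_of_pos (by simpa using hpe),
        List.countP_cons_of_neg (by simp [hpe])]
      have := h1 e
      omega
    · have hpe' : pb F e = false := by
        cases h : pb F e
        · rfl
        · exact absurd h hpe
      rw [List.countP_cons_of_neg (by simp [hpe']),
        List.countP_cons_of_pos (by simp [hpe'])]
      have hA := h2 e hpe'
      have h1e := h1 e
      rw [Nat.mul_succ]
      omega

/-- The key doubling estimate: with a suitable iterate, every nonempty reduced
closed path at least doubles in length. -/
theorem doubling (hF : IsImmersion G F)
    (hat : ¬ ∃ k ≥ 1, ∃ σ : List G.E, IsCircuit G σ ∧ IsCyclicallyReduced G σ ∧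
      FreelyHomotopic G (iterMap G F k σ) σ)
    (N : ℕ) (hN : ∀ e, ¬ Bdd F e → 2 * Fintype.card G.V + 2 ≤ elen F N e)
    {l : List G.E} {v : G.V} (hne : l ≠ []) (hp : IsPath G l)
    (hs : StartsAt G l v) (he : EndsAt G l v)
    (hch : l.Chain' (fun e e' => e' ≠ G.bar e)) :
    2 * l.length ≤ (iterMap G F N l).length := by
  have hcongr : l.countP (fun a => decide ¬(pb F a = true)) = l.countP (fun e => !pb F e) := by
    apply List.countP_congr
    intro a _
    cases h : pb F a <;> simp [h]
  have hst : l.countP (pb F) + l.countP (fun e => !pb F e) = l.length := by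
    rw [← hcongr, ← List.length_eq_countP_add_countP]
  have ht1 : 1 ≤ l.countP (fun e => !pb F e) := by
    by_contra h0
    push_neg at h0
    have ht0 : l.countP (fun e => !pb F e) = 0 := by omega
    have hall : ∀ e ∈ l, Bdd F e := by
      intro e hel
      have h0' := List.countP_eq_zero.mp ht0 e hel
      have hpt : pb F e = true := by
        cases h : pb F e
        · exact absurd (by simp [h]) h0'
        · rfl
      exact (pb_iff F e).mp hpt
    obtain ⟨w, hw1, hw2, hw3⟩ := exists_circuit_of_loop l v hne hp hs he hch
    exact no_bdd_circuit F hF hat hw1 hw2 (fun e hew => hall e (hw3 e hew))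
  have hsle := count_bdd_le F hF hat l hp hch
  have hsle' : l.countP (pb F) ≤
      Fintype.card G.V * l.countP (fun e => !pb F e) + Fintype.card G.V := by
    rw [Nat.mul_succ] at hsle
    exact hsle
  have hKt : Fintype.card G.V * 1 ≤
      Fintype.card G.V * l.countP (fun e => !pb F e) :=
    Nat.mul_le_mul_left _ ht1
  have hsum := sum_lb F (2 * Fintype.card G.V + 2) (elen F N) (elen_pos F N)
    (fun e hpe => hN e ((pb_false_iff F e).mp hpe)) l
  rw [length_iterMap]
  refine le_trans ?_ hsum
  have hexp : (2 * Fintype.card G.V + 2) * l.countP (fun e => !pb F e) =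
      2 * (Fintype.card G.V * l.countP (fun e => !pb F e)) +
        2 * l.countP (fun e => !pb F e) := by ring
  rw [hexp]
  linarith [hsle', hKt, hst]

end CGraph

open CGraph

/-- Brinkmann-type lemma for immersions: an immersion of a finite connected core graph
with no invariant loop of degree 1 (atoroidal) is `(2,n)`-hyperbolic for some `n ≥ 1`:
for every nontrivial based loop `σ`, either `2·l(f^n(σ)) ≤ l(f^{2n}(σ))` or
`2·l(f^n(σ)) ≤ l(σ)`, where `l` is combinatorial length after tightening rel basepoint. -/
theorem atoroidal_immersion_is_hyperbolic (G : CGraph) (F : GMap G) (hF : IsImmersion G F)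
    (hconn : Conn G) (hcore : ∀ v : G.V, valence G v ≠ 1)
    (hatoroidal : ¬ ∃ k ≥ 1, ∃ σ : List G.E, IsCircuit G σ ∧ IsCyclicallyReduced G σ ∧
      FreelyHomotopic G (iterMap G F k σ) σ) :
    ∃ n ≥ 1, ∀ (v : G.V) (σ : List G.E), IsBasedLoopAt G σ v → redLen G σ ≠ 0 →
      2 * redLen G (iterMap G F n σ) ≤ redLen G (iterMap G F (2 * n) σ) ∨
      2 * redLen G (iterMap G F n σ) ≤ redLen G σ := by
  classical
  have hex : ∀ e : G.E, ∃ n, ¬ Bdd F e → 2 * Fintype.card G.V + 2 ≤ elen F n e := by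
    intro e
    by_cases hb : Bdd F e
    · exact ⟨0, fun h => absurd hb h⟩
    · have hb' := hb
      unfold Bdd at hb'
      push_neg at hb'
      obtain ⟨n, hn⟩ := hb' (2 * Fintype.card G.V + 1)
      exact ⟨n, fun _ => by omega⟩
  choose nf hnf using hex
  set N := (Finset.univ.sup nf) + 1 with hNdef
  have hN1 : 1 ≤ N := by omega
  have hNe : ∀ e, ¬ Bdd F e → 2 * Fintype.card G.V + 2 ≤ elen F N e := by
    intro e hbe
    refine le_trans (hnf e hbe) (elen_mono F e ?_)
    calc nf e ≤ Finset.univ.sup nf := Finset.le_sup (Finset.mem_univ e)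
      _ ≤ N := by omega
  refine ⟨N, hN1, ?_⟩
  intro v σ hloop hred
  obtain ⟨hσne, hσp, hσs, hσe⟩ := hloop
  obtain ⟨ρ, hrtg, hterm⟩ := exists_reduct σ
  have hρlen := redLen_eq hrtg hterm
  have hρne : ρ ≠ [] := by
    intro h
    apply hred
    rw [hρlen, h]
    rfl
  obtain ⟨hp, hs, he⟩ := rtg_closed hrtg hσp hσs hσe
  have hch : ρ.Chain' (fun e e' => e' ≠ G.bar e) := not_reduceStep_iff_chain'.mp hterm
  left
  have hRCN : RC (iterMap G F N ρ) (F.vmap^[N] v) := RC_iterMap F hF N ⟨hp, hs, he, hch⟩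
  have hRC2N : RC (iterMap G F (2 * N) ρ) (F.vmap^[2 * N] v) :=
    RC_iterMap F hF (2 * N) ⟨hp, hs, he, hch⟩
  have hA : redLen G (iterMap G F N σ) = (iterMap G F N ρ).length :=
    redLen_eq (iterMap_rtg F N hrtg) (not_reduceStep_iff_chain'.mpr hRCN.2.2.2)
  have hB : redLen G (iterMap G F (2 * N) σ) = (iterMap G F (2 * N) ρ).length :=
    redLen_eq (iterMap_rtg F (2 * N) hrtg) (not_reduceStep_iff_chain'.mpr hRC2N.2.2.2)
  rw [hA, hB]
  have hcomp : iterMap G F (2 * N) ρ = iterMap G F N (iterMap G F N ρ) := by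
    unfold iterMap
    rw [← Function.iterate_add_apply]
    congr 1
    omega
  rw [hcomp]
  exact doubling F hF hatoroidal N hNe (iterMap_ne_nil F N hρne)
    hRCN.1 hRCN.2.1 hRCN.2.2.1 hRCN.2.2.2
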